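/- The explicit piecewise linear density f is long-tailed: f(x) > 0 for all x ≥ 0 and, for each constant t ∈ ℝ, f(x+t)/f(x) → 1 as x → ∞; that is, f ∈ 𝓛₀. -/

import Mathlib

open MeasureTheory Filter Set

noncomputable section

/-- `a_n = 2^(n²)`. -/
def aSeq (n : ℕ) : ℝ := 2 ^ (n ^ 2)

/-- `m_n` : the least positive integer `k` with `k ≥ (√5/√6)·n`. -/
def mIdx (n : ℕ) : ℕ := max 1 ⌈(Real.sqrt 5 / Real.sqrt 6) * (n : ℝ)⌉₊

/-- `b_n = a_n + a_{m_n}·(ln (n+1))²`. -/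
def bSeq (n : ℕ) : ℝ := aSeq n + aSeq (mIdx n) * (Real.log ((n : ℝ) + 1)) ^ 2

/-- `c_n = (a_{n+1} + b_n)/2`. -/
def cSeq (n : ℕ) : ℝ := (aSeq (n + 1) + bSeq n) / 2

/-- `f` is affine (the linear interpolation of its endpoint values) on `[p, q]`. -/
def AffineOnIcc (f : ℝ → ℝ) (p q : ℝ) : Prop :=
  ∀ x ∈ Set.Icc p q, f x = f p + (x - p) / (q - p) * (f q - f p)

/-- The explicit continuous piecewise linear construction `f₀ : [0,∞) → (0,∞)`
with `f₀(0) = 1`, `f₀(a_n) = 2 a_n⁻³`, `f₀(b_n) = 2 a_n⁻³ / ln(n+1)`,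
`f₀(c_n) = 2 a_n⁻³`, affine on `[0,a₁]`, `[a_n,b_n]`, `[b_n,c_n]`, `[c_n,a_{n+1}]`. -/
def PWConstruction (f₀ : ℝ → ℝ) : Prop :=
  ContinuousOn f₀ (Set.Ici 0) ∧
  (∀ x : ℝ, 0 ≤ x → 0 < f₀ x) ∧
  f₀ 0 = 1 ∧
  (∀ n : ℕ, 1 ≤ n →
    f₀ (aSeq n) = 2 / (aSeq n) ^ 3 ∧
    f₀ (bSeq n) = 2 / (aSeq n) ^ 3 / Real.log ((n : ℝ) + 1) ∧
    f₀ (cSeq n) = 2 / (aSeq n) ^ 3) ∧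
  AffineOnIcc f₀ 0 (aSeq 1) ∧
  (∀ n : ℕ, 1 ≤ n →
    AffineOnIcc f₀ (aSeq n) (bSeq n) ∧
    AffineOnIcc f₀ (bSeq n) (cSeq n) ∧
    AffineOnIcc f₀ (cSeq n) (aSeq (n + 1)))

/-- The normalized extension `f = f₀ / ∫₀^∞ f₀(y) dy`, extended by `0` on `(-∞,0)`. -/
def normExt (f₀ : ℝ → ℝ) : ℝ → ℝ :=
  fun x => if x < 0 then 0 else f₀ x / ∫ y in Set.Ici (0:ℝ), f₀ y

set_option maxHeartbeats 1000000

lemma a_pos (n : ℕ) : 0 < aSeq n := by unfold aSeq; positivity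

lemma a_le {m n : ℕ} (h : m ≤ n) : aSeq m ≤ aSeq n := by
  unfold aSeq; exact pow_le_pow_right₀ one_le_two (Nat.pow_le_pow_left h 2)

lemma a_ge (n : ℕ) : (n : ℝ) ≤ aSeq n := by
  have h1 : n < 2 ^ n := Nat.lt_two_pow_self
  have h2 : (2:ℝ) ^ n ≤ aSeq n := by
    unfold aSeq; exact pow_le_pow_right₀ one_le_two (Nat.le_self_pow two_ne_zero n)
  calc (n:ℝ) ≤ ((2^n : ℕ) : ℝ) := by exact_mod_cast h1.le
    _ = (2:ℝ)^n := by push_cast; ring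
    _ ≤ aSeq n := h2

lemma mIdx_le {n : ℕ} (h : 1 ≤ n) : mIdx n ≤ n := by
  unfold mIdx
  refine max_le h (Nat.ceil_le.2 ?_)
  have h5 : Real.sqrt 5 ≤ Real.sqrt 6 := Real.sqrt_le_sqrt (by norm_num)
  have h6 : (0:ℝ) < Real.sqrt 6 := Real.sqrt_pos.2 (by norm_num)
  have : Real.sqrt 5 / Real.sqrt 6 ≤ 1 := div_le_one_of_le₀ h5 h6.le
  nlinarith [Nat.cast_nonneg (α := ℝ) n]

lemma mIdx_sq (n : ℕ) : 5 * n ^ 2 ≤ 6 * (mIdx n) ^ 2 := by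
  have h1 : (Real.sqrt 5 / Real.sqrt 6) * n ≤ mIdx n := by
    calc (Real.sqrt 5 / Real.sqrt 6) * n ≤ (⌈(Real.sqrt 5 / Real.sqrt 6) * (n:ℝ)⌉₊ : ℝ) :=
          Nat.le_ceil _
      _ ≤ mIdx n := by exact_mod_cast Nat.cast_le.2 (le_max_right _ _)
  have h0 : (0:ℝ) ≤ (Real.sqrt 5 / Real.sqrt 6) * n := by positivity
  have h2 : ((Real.sqrt 5 / Real.sqrt 6) * n) ^ 2 ≤ (mIdx n : ℝ) ^ 2 := by
    exact pow_le_pow_left₀ h0 h1 2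
  have h3 : ((Real.sqrt 5 / Real.sqrt 6) * n) ^ 2 = 5 / 6 * n ^ 2 := by
    rw [mul_pow, div_pow, Real.sq_sqrt (by norm_num : (0:ℝ) ≤ 5), Real.sq_sqrt (by norm_num : (0:ℝ) ≤ 6)]
  have : (5:ℝ) * n ^ 2 ≤ 6 * (mIdx n)^2 := by nlinarith
  exact_mod_cast this

lemma log_le (n : ℕ) : Real.log ((n:ℝ) + 1) ≤ n := by
  have h1 := Real.add_one_le_exp (n : ℝ)
  have h : (0:ℝ) < (n:ℝ) + 1 := by positivity
  calc Real.log ((n:ℝ)+1) ≤ Real.log (Real.exp n) := Real.log_le_log h h1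
    _ = n := Real.log_exp _

lemma log_pos' {n : ℕ} (h : 1 ≤ n) : 0 < Real.log ((n:ℝ) + 1) := by
  apply Real.log_pos
  have : (1:ℝ) ≤ n := by exact_mod_cast h
  linarith

lemma log_ge_one {n : ℕ} (h : 2 ≤ n) : 1 ≤ Real.log ((n:ℝ) + 1) := by
  rw [Real.le_log_iff_exp_le (by positivity)]
  have h3 : (3:ℝ) ≤ (n:ℝ) + 1 := by
    have : (2:ℝ) ≤ n := by exact_mod_cast h
    linarith
  calc Real.exp 1 ≤ 2.7182818286 := Real.exp_one_lt_d9.le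
    _ ≤ 3 := by norm_num
    _ ≤ (n:ℝ) + 1 := h3

lemma a_succ (n : ℕ) : aSeq (n+1) = aSeq n * 2 ^ (2*n+1) := by
  unfold aSeq
  rw [← pow_add]
  congr 1
  ring

lemma a_db (n : ℕ) : 2 * aSeq n ≤ aSeq (n+1) := by
  rw [a_succ]
  have h1 : (2:ℝ) ≤ 2 ^ (2*n+1) := by
    calc (2:ℝ) = 2^1 := (pow_one 2).symm
      _ ≤ 2 ^ (2*n+1) := pow_le_pow_right₀ one_le_two (by omega)
  nlinarith [a_pos n]

lemma b_gt {n : ℕ} (h : 1 ≤ n) : aSeq n < bSeq n := by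
  unfold bSeq
  have h1 := a_pos (mIdx n)
  have h2 := log_pos' h
  nlinarith [mul_pos h1 (pow_pos h2 2)]

lemma b_le {n : ℕ} (h : 1 ≤ n) : bSeq n ≤ aSeq (n+1) / 2 := by
  have hm : aSeq (mIdx n) ≤ aSeq n := a_le (mIdx_le h)
  have hl : Real.log ((n:ℝ)+1) ≤ n := log_le n
  have hl0 : 0 ≤ Real.log ((n:ℝ)+1) := (log_pos' h).le
  have h1 : bSeq n ≤ aSeq n * (1 + (n:ℝ)^2) := by
    unfold bSeq
    have : (Real.log ((n:ℝ)+1))^2 ≤ (n:ℝ)^2 := pow_le_pow_left₀ hl0 hl 2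
    nlinarith [a_pos n, a_pos (mIdx n)]
  have h2 : aSeq n * (1 + (n:ℝ)^2) ≤ aSeq (n+1) / 2 := by
    rw [a_succ]
    have hn : (1:ℝ) + (n:ℝ)^2 ≤ 2^(2*n+1)/2 := by
      have h3 : ((n:ℝ)) + 1 ≤ 2^n := by
        have h' : n + 1 ≤ 2^n := Nat.lt_two_pow_self
        have : ((n:ℕ):ℝ) + 1 ≤ ((2^n : ℕ):ℝ) := by exact_mod_cast h'
        push_cast at this
        linarith
      have h4 : ((n:ℝ)+1)^2 ≤ (2^n : ℝ)^2 := by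
        have h0 : (0:ℝ) ≤ (n:ℝ)+1 := by positivity
        exact pow_le_pow_left₀ h0 h3 2
      have h5 : ((2:ℝ)^n)^2 = 2^(2*n+1)/2 := by
        rw [← pow_mul]
        rw [show 2*n+1 = n*2+1 from by ring, pow_succ]
        ring
      nlinarith
    nlinarith [a_pos n]
  linarith

lemma b_lt_c {n : ℕ} (h : 1 ≤ n) : bSeq n < cSeq n := by
  have h1 := b_le h
  have h2 := a_pos (n+1)
  unfold cSeq
  linarith

lemma c_lt_a {n : ℕ} (h : 1 ≤ n) : cSeq n < aSeq (n+1) := by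
  have h1 := b_le h
  have h2 := a_pos (n+1)
  unfold cSeq
  linarith

lemma cb_len {n : ℕ} (h : 1 ≤ n) : aSeq (n+1) / 4 ≤ cSeq n - bSeq n := by
  have h1 := b_le h
  unfold cSeq
  linarith

lemma ac_len {n : ℕ} (h : 1 ≤ n) : aSeq (n+1) / 4 ≤ aSeq (n+1) - cSeq n := by
  have h1 := b_le h
  unfold cSeq
  linarith

def MyLip (f : ℝ → ℝ) (K p q : ℝ) : Prop :=
  ∀ x ∈ Set.Icc p q, ∀ y ∈ Set.Icc p q, |f y - f x| ≤ K * |y - x|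

lemma affine_lip {f : ℝ → ℝ} {p q K : ℝ} (h : AffineOnIcc f p q) (hpq : p < q)
    (hK : |f q - f p| / (q - p) ≤ K) : MyLip f K p q := by
  intro x hx y hy
  rw [h x hx, h y hy]
  have hqp : (0:ℝ) < q - p := by linarith
  have he : f p + (y - p)/(q-p)*(f q - f p) - (f p + (x-p)/(q-p)*(f q-f p))
       = (y - x) * ((f q - f p) / (q-p)) := by field_simp; ring
  rw [he, abs_mul, abs_div, abs_of_pos hqp, mul_comm]
  have h0 : (0:ℝ) ≤ |y - x| := abs_nonneg _
  exact mul_le_mul_of_nonneg_right hK h0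

lemma affine_mem {f : ℝ → ℝ} {p q x : ℝ} (h : AffineOnIcc f p q) (hpq : p < q)
    (hx : x ∈ Set.Icc p q) : min (f p) (f q) ≤ f x ∧ f x ≤ max (f p) (f q) := by
  rw [h x hx]
  obtain ⟨h1, h2⟩ := hx
  have hqp : (0:ℝ) < q - p := by linarith
  have ht0 : 0 ≤ (x - p)/(q-p) := div_nonneg (by linarith) hqp.le
  have ht1 : (x - p)/(q-p) ≤ 1 := by
    rw [div_le_one hqp]; linarith
  constructor
  · rcases le_total (f p) (f q) with hc | hc
    · rw [min_eq_left hc]; nlinarith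
    · rw [min_eq_right hc]; nlinarith
  · rcases le_total (f p) (f q) with hc | hc
    · rw [max_eq_right hc]; nlinarith
    · rw [max_eq_left hc]; nlinarith

lemma mylip_mono {f : ℝ → ℝ} {K K' p q : ℝ} (h : MyLip f K p q) (hK : K ≤ K') :
    MyLip f K' p q := by
  intro x hx y hy
  exact (h x hx y hy).trans (mul_le_mul_of_nonneg_right hK (abs_nonneg _))

lemma mylip_glue {f : ℝ → ℝ} {K p q r : ℝ} (hpq : p ≤ q) (hqr : q ≤ r)
    (h1 : MyLip f K p q) (h2 : MyLip f K q r) : MyLip f K p r := by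
  have aux : ∀ x ∈ Set.Icc p r, ∀ y ∈ Set.Icc p r, x ≤ y → |f y - f x| ≤ K * |y - x| := by
    intro x hx y hy hxy
    rcases le_total y q with hyq | hqy
    · exact h1 x ⟨hx.1, hxy.trans hyq⟩ y ⟨hx.1.trans hxy, hyq⟩
    · rcases le_total q x with hqx | hxq
      · exact h2 x ⟨hqx, hxy.trans hy.2⟩ y ⟨hqx.trans hxy, hy.2⟩
      · have e1 := h1 x ⟨hx.1, hxq⟩ q ⟨hpq, le_refl q⟩
        have e2 := h2 q ⟨le_refl q, hqr⟩ y ⟨hqy, hy.2⟩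
        calc |f y - f x| ≤ |f y - f q| + |f q - f x| := abs_sub_le _ _ _
          _ ≤ K * |q - x| + K * |y - q| := by linarith
          _ = K * |y - x| := by
              rw [abs_of_nonneg (by linarith : (0:ℝ) ≤ q - x),
                abs_of_nonneg (by linarith : (0:ℝ) ≤ y - q),
                abs_of_nonneg (by linarith : (0:ℝ) ≤ y - x)]
              ring
  intro x hx y hy
  rcases le_total x y with hxy | hyx
  · exact aux x hx y hy hxy
  · rw [abs_sub_comm, abs_sub_comm y x]
    exact aux y hy x hx hyx

def Kc (n : ℕ) : ℝ := 8 / (aSeq n) ^ 3 * (1 / aSeq (mIdx n) + 1 / aSeq (n + 1))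

lemma Kc_nonneg (n : ℕ) : 0 ≤ Kc n := by
  unfold Kc
  have := a_pos n; have := a_pos (mIdx n); have := a_pos (n+1)
  positivity

lemma block_lip {f₀ : ℝ → ℝ} (hf₀ : PWConstruction f₀) {n : ℕ} (hn : 2 ≤ n) :
    MyLip f₀ (Kc n) (aSeq n) (aSeq (n+1)) := by
  have hn1 : 1 ≤ n := by omega
  obtain ⟨-, -, -, hval, -, haff⟩ := hf₀
  obtain ⟨hfa, hfb, hfc⟩ := hval n hn1
  obtain ⟨haf1, haf2, haf3⟩ := haff n hn1
  obtain ⟨hfa', -, -⟩ := hval (n+1) (by omega)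
  set a := aSeq n with ha_def
  set a' := aSeq (n+1) with ha'_def
  set am := aSeq (mIdx n) with ham_def
  set L := Real.log ((n:ℝ) + 1) with hL_def
  have ha : 0 < a := a_pos n
  have ha' : 0 < a' := a_pos (n+1)
  have ham : 0 < am := a_pos (mIdx n)
  have hL : 1 ≤ L := log_ge_one hn
  have haa' : a ≤ a' := a_le (by omega)
  set v : ℝ := 2 / a ^ 3 with hv_def
  have hv : 0 < v := by positivity
  have hvL : 0 < v / L := by positivity
  have hvLv : v / L ≤ v := by
    rw [div_le_iff₀ (by linarith : (0:ℝ) < L)]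
    nlinarith
  have hva' : 2 / a' ^ 3 ≤ v := by
    rw [hv_def]
    apply div_le_div_of_nonneg_left (by norm_num) (by positivity)
    exact pow_le_pow_left₀ ha.le haa' 3
  have hKc : Kc n = 8 / a ^ 3 * (1 / am + 1 / a') := rfl
  -- slope bounds
  have hba : bSeq n - a = am * L ^ 2 := by rw [ha_def]; unfold bSeq; ring
  have hcb : a' / 4 ≤ cSeq n - bSeq n := cb_len hn1
  have hac : a' / 4 ≤ a' - cSeq n := ac_len hn1
  have hKam : 8 / a ^ 3 * (1 / am) ≤ Kc n := by
    rw [hKc]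
    have : (0:ℝ) ≤ 8 / a^3 * (1/a') := by positivity
    nlinarith [hv]
  have hKa' : 8 / a ^ 3 * (1 / a') ≤ Kc n := by
    rw [hKc]
    have : (0:ℝ) ≤ 8 / a^3 * (1/am) := by positivity
    nlinarith [hv]
  have lip1 : MyLip f₀ (Kc n) a (bSeq n) := by
    apply affine_lip haf1 (b_gt hn1)
    rw [div_le_iff₀ (by rw [hba]; positivity)]
    rw [hfa, hfb, hba]
    have e1 : |v / L - v| ≤ v := by
      rw [abs_of_nonpos (by linarith)]
      linarith
    calc |v / L - v| ≤ v := e1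
      _ ≤ 8 / a ^ 3 * (1 / am) * (am * L ^ 2) := by
          have e2 : 8 / a ^ 3 * (1 / am) * (am * L ^ 2) = 8 / a ^ 3 * L ^ 2 := by
            field_simp
          rw [e2]
          have h1 : (1:ℝ) ≤ L ^ 2 := by nlinarith
          have h3 : 8/a^3 ≤ 8/a^3 * L^2 := le_mul_of_one_le_right (by positivity) h1
          have h4 : v ≤ 8/a^3 := by
            rw [hv_def]
            gcongr
            norm_num
          linarith
      _ ≤ Kc n * (am * L ^ 2) := by
          apply mul_le_mul_of_nonneg_right hKam (by positivity)
  have key23 : ∀ w : ℝ, |w| ≤ v → ∀ len : ℝ, a'/4 ≤ len → |w| ≤ Kc n * len := by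
    intro w hw len hlen
    have h1 : v ≤ 8 / a ^ 3 * (1 / a') * (a'/4) := by
      have e : 8 / a ^ 3 * (1 / a') * (a'/4) = 2 / a ^3 := by field_simp; ring
      rw [e]
    calc |w| ≤ v := hw
      _ ≤ 8 / a ^ 3 * (1 / a') * (a'/4) := h1
      _ ≤ Kc n * (a'/4) := mul_le_mul_of_nonneg_right hKa' (by positivity)
      _ ≤ Kc n * len := mul_le_mul_of_nonneg_left hlen (Kc_nonneg n)
  have lip2 : MyLip f₀ (Kc n) (bSeq n) (cSeq n) := by
    apply affine_lip haf2 (b_lt_c hn1)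
    rw [div_le_iff₀ (by linarith [a_pos (n+1)] : (0:ℝ) < cSeq n - bSeq n)]
    rw [hfb, hfc]
    have e1 : |v - v/L| ≤ v := by rw [abs_of_nonneg (by linarith)]; linarith
    exact key23 (v - v/L) e1 (cSeq n - bSeq n) hcb
  have lip3 : MyLip f₀ (Kc n) (cSeq n) a' := by
    apply affine_lip haf3 (c_lt_a hn1)
    rw [div_le_iff₀ (by linarith [a_pos (n+1)] : (0:ℝ) < a' - cSeq n)]
    rw [hfc, hfa']
    have e1 : |2 / a' ^ 3 - v| ≤ v := by
      rw [abs_of_nonpos (by linarith)]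
      have : (0:ℝ) < 2 / a' ^ 3 := by positivity
      linarith
    exact key23 (2 / a' ^ 3 - v) e1 (a' - cSeq n) hac
  have g1 : MyLip f₀ (Kc n) a (cSeq n) :=
    mylip_glue (b_gt hn1).le (b_lt_c hn1).le lip1 lip2
  exact mylip_glue ((b_gt hn1).trans (b_lt_c hn1)).le (c_lt_a hn1).le g1 lip3

lemma block_lb {f₀ : ℝ → ℝ} (hf₀ : PWConstruction f₀) {n : ℕ} (hn : 2 ≤ n) :
    ∀ x ∈ Set.Icc (aSeq n) (aSeq (n+1)), 2 / (aSeq (n+1)) ^ 3 ≤ f₀ x := by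
  have hn1 : 1 ≤ n := by omega
  obtain ⟨-, -, -, hval, -, haff⟩ := hf₀
  obtain ⟨hfa, hfb, hfc⟩ := hval n hn1
  obtain ⟨hfa', -, -⟩ := hval (n+1) (by omega)
  obtain ⟨haf1, haf2, haf3⟩ := haff n hn1
  have ha : 0 < aSeq n := a_pos n
  have ha' : 0 < aSeq (n+1) := a_pos (n+1)
  have hL1 : 1 ≤ Real.log ((n:ℝ)+1) := log_ge_one hn
  have haa' : aSeq n ≤ aSeq (n+1) := a_le (by omega)
  -- the three candidate minimal values are all ≥ 2/a'^3
  have hva : 2 / aSeq (n+1) ^ 3 ≤ 2 / aSeq n ^ 3 :=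
    div_le_div_of_nonneg_left (by norm_num) (by positivity) (pow_le_pow_left₀ ha.le haa' 3)
  have hvb : 2 / aSeq (n+1) ^ 3 ≤ 2 / aSeq n ^ 3 / Real.log ((n:ℝ)+1) := by
    rw [div_div]
    apply div_le_div_of_nonneg_left (by norm_num) (by positivity)
    -- a^3 * L ≤ a'^3
    have h1 : Real.log ((n:ℝ)+1) ≤ (n:ℝ) := log_le n
    have h2 : (n:ℝ) ≤ aSeq n := a_ge n
    have h4 : aSeq (n+1) ^ 3 = aSeq n ^ 3 * 2 ^ (6*n+3) := by
      rw [a_succ, mul_pow, ← pow_mul]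
      congr 2
      ring
    have h5 : (n:ℝ) ≤ 2 ^ (6*n+3) := by
      have hn' : n + 1 ≤ 2 ^ n := Nat.lt_two_pow_self
      have h6 : ((n:ℕ):ℝ) + 1 ≤ ((2^n : ℕ):ℝ) := by exact_mod_cast hn'
      push_cast at h6
      calc (n:ℝ) ≤ 2 ^ n := by linarith
        _ ≤ 2 ^ (6*n+3) := pow_le_pow_right₀ one_le_two (by omega)
    calc aSeq n ^3 * Real.log ((n:ℝ)+1) ≤ aSeq n ^3 * (n:ℝ) := by nlinarith [pow_pos ha 3]
      _ ≤ aSeq n ^ 3 * 2 ^ (6*n+3) := by nlinarith [pow_pos ha 3]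
      _ = aSeq (n+1) ^ 3 := h4.symm
  intro x hx
  rcases le_total x (bSeq n) with h1 | h1
  · have := (affine_mem haf1 (b_gt hn1) ⟨hx.1, h1⟩).1
    rw [hfa, hfb] at this
    exact le_trans (le_min hva hvb) this
  rcases le_total x (cSeq n) with h2 | h2
  · have := (affine_mem haf2 (b_lt_c hn1) ⟨h1, h2⟩).1
    rw [hfb, hfc] at this
    exact le_trans (le_min hvb hva) this
  · have := (affine_mem haf3 (c_lt_a hn1) ⟨h2, hx.2⟩).1
    rw [hfc, hfa'] at this
    exact le_trans (le_min hva (le_refl _)) this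

lemma block_ub {f₀ : ℝ → ℝ} (hf₀ : PWConstruction f₀) {n : ℕ} (hn : 2 ≤ n) :
    ∀ x ∈ Set.Icc (aSeq n) (aSeq (n+1)), f₀ x ≤ 2 / (aSeq n) ^ 3 := by
  have hn1 : 1 ≤ n := by omega
  obtain ⟨-, -, -, hval, -, haff⟩ := hf₀
  obtain ⟨hfa, hfb, hfc⟩ := hval n hn1
  obtain ⟨hfa', -, -⟩ := hval (n+1) (by omega)
  obtain ⟨haf1, haf2, haf3⟩ := haff n hn1
  have ha : 0 < aSeq n := a_pos n
  have ha' : 0 < aSeq (n+1) := a_pos (n+1)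
  have hL1 : 1 ≤ Real.log ((n:ℝ)+1) := log_ge_one hn
  have haa' : aSeq n ≤ aSeq (n+1) := a_le (by omega)
  have hva : 2 / aSeq (n+1) ^ 3 ≤ 2 / aSeq n ^ 3 :=
    div_le_div_of_nonneg_left (by norm_num) (by positivity) (pow_le_pow_left₀ ha.le haa' 3)
  have hvb : 2 / aSeq n ^ 3 / Real.log ((n:ℝ)+1) ≤ 2 / aSeq n ^ 3 := by
    rw [div_le_iff₀ (by linarith : (0:ℝ) < Real.log ((n:ℝ)+1))]
    nlinarith [pow_pos ha 3, div_pos (by norm_num : (0:ℝ) < 2) (pow_pos ha 3)]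
  intro x hx
  rcases le_total x (bSeq n) with h1 | h1
  · have := (affine_mem haf1 (b_gt hn1) ⟨hx.1, h1⟩).2
    rw [hfa, hfb] at this
    exact this.trans (max_le (le_refl _) hvb)
  rcases le_total x (cSeq n) with h2 | h2
  · have := (affine_mem haf2 (b_lt_c hn1) ⟨h1, h2⟩).2
    rw [hfb, hfc] at this
    exact this.trans (max_le hvb (le_refl _))
  · have := (affine_mem haf3 (c_lt_a hn1) ⟨h2, hx.2⟩).2
    rw [hfc, hfa'] at this
    exact this.trans (max_le (le_refl _) hva)

lemma exists_block {N : ℕ} {x : ℝ} (hx : aSeq N ≤ x) :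
    ∃ k, N ≤ k ∧ aSeq k ≤ x ∧ x < aSeq (k+1) := by
  have hex : ∃ j, x < aSeq (j+1) := by
    obtain ⟨j, hj⟩ := exists_nat_gt x
    exact ⟨j, hj.trans_le ((a_ge j).trans (a_le (by omega)))⟩
  classical
  let k := Nat.find hex
  have hk : x < aSeq (k+1) := Nat.find_spec hex
  have hmin : ∀ j < k, ¬ (x < aSeq (j+1)) := fun j hj => Nat.find_min hex hj
  have hNk : N ≤ k := by
    by_contra hc
    push_neg at hc
    have h1 : k + 1 ≤ N := hc
    exact absurd (hk.trans_le (a_le h1)) (not_lt.2 hx)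
  refine ⟨k, hNk, ?_, hk⟩
  rcases Nat.eq_zero_or_pos k with h0 | h0
  · rw [h0]
    calc aSeq 0 ≤ aSeq N := a_le (Nat.zero_le N)
      _ ≤ x := hx
  · have h2 := not_lt.1 (hmin (k-1) (by omega))
    have e : k - 1 + 1 = k := by omega
    rw [e] at h2
    exact h2

lemma term_bound {p q r j : ℕ} (h : 2 + 3*p^2 + j ≤ 3*q^2 + r^2) :
    4 * aSeq p ^ 3 / aSeq q ^ 3 * (1 / aSeq r) ≤ (1/2 : ℝ)^j := by
  unfold aSeq
  rw [div_mul_div_comm, mul_one]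
  rw [show (1/2:ℝ)^j = 1 / 2^j by rw [div_pow, one_pow]]
  rw [div_le_div_iff₀ (by positivity) (by positivity)]
  have eL : 4*((2:ℝ)^(p^2))^3 * 2^j = 2^(2 + p^2*3 + j) := by
    rw [pow_add, pow_add, ← pow_mul]
    norm_num
  have eR : (1:ℝ) * (((2:ℝ)^(q^2))^3 * 2^(r^2)) = 2^(q^2*3 + r^2) := by
    rw [one_mul, pow_add, ← pow_mul]
  rw [eL, eR]
  exact pow_le_pow_right₀ one_le_two (by linarith)

lemma esum_bound {j : ℕ} (hj : 20 ≤ j) :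
    aSeq (j+2) ^ 3 / 2 * (Kc j + Kc (j+1) + Kc (j+2)) ≤ 6 * (1/2:ℝ)^j := by
  have h20 : 20 * j ≤ j * j := Nat.mul_le_mul_right j hj
  have hm1 := mIdx_sq j
  have hm2 := mIdx_sq (j+1)
  have hm3 := mIdx_sq (j+2)
  have t1 : 4 * aSeq (j+2) ^ 3 / aSeq j ^ 3 * (1 / aSeq (mIdx j)) ≤ (1/2:ℝ)^j :=
    term_bound (by nlinarith)
  have t2 : 4 * aSeq (j+2) ^ 3 / aSeq j ^ 3 * (1 / aSeq (j+1)) ≤ (1/2:ℝ)^j :=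
    term_bound (by nlinarith)
  have t3 : 4 * aSeq (j+2) ^ 3 / aSeq (j+1) ^ 3 * (1 / aSeq (mIdx (j+1))) ≤ (1/2:ℝ)^j :=
    term_bound (by nlinarith)
  have t4 : 4 * aSeq (j+2) ^ 3 / aSeq (j+1) ^ 3 * (1 / aSeq (j+2)) ≤ (1/2:ℝ)^j :=
    term_bound (by nlinarith)
  have t5 : 4 * aSeq (j+2) ^ 3 / aSeq (j+2) ^ 3 * (1 / aSeq (mIdx (j+2))) ≤ (1/2:ℝ)^j :=
    term_bound (by nlinarith)
  have t6 : 4 * aSeq (j+2) ^ 3 / aSeq (j+2) ^ 3 * (1 / aSeq (j+3)) ≤ (1/2:ℝ)^j :=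
    term_bound (by nlinarith)
  have hexp : aSeq (j+2) ^ 3 / 2 * (Kc j + Kc (j+1) + Kc (j+2)) =
      4 * aSeq (j+2) ^ 3 / aSeq j ^ 3 * (1 / aSeq (mIdx j)) +
      4 * aSeq (j+2) ^ 3 / aSeq j ^ 3 * (1 / aSeq (j+1)) +
      4 * aSeq (j+2) ^ 3 / aSeq (j+1) ^ 3 * (1 / aSeq (mIdx (j+1))) +
      4 * aSeq (j+2) ^ 3 / aSeq (j+1) ^ 3 * (1 / aSeq (j+2)) +
      4 * aSeq (j+2) ^ 3 / aSeq (j+2) ^ 3 * (1 / aSeq (mIdx (j+2))) +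
      4 * aSeq (j+2) ^ 3 / aSeq (j+2) ^ 3 * (1 / aSeq (j+3)) := by
    unfold Kc
    ring
  rw [hexp]
  linarith

lemma ratio_tendsto {f₀ : ℝ → ℝ} (hf₀ : PWConstruction f₀) (t : ℝ) :
    Tendsto (fun x => f₀ (x + t) / f₀ x) atTop (nhds 1) := by
  have hpos := hf₀.2.1
  rw [Metric.tendsto_atTop]
  intro ε hε
  have h0 : Tendsto (fun k : ℕ => 6*(1/2:ℝ)^k * |t|) atTop (nhds 0) := by
    have h1 : Tendsto (fun k : ℕ => (1/2:ℝ)^k) atTop (nhds 0) := by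
      apply tendsto_pow_atTop_nhds_zero_of_lt_one <;> norm_num
    have h2 := (h1.const_mul 6).mul_const |t|
    simpa using h2
  obtain ⟨n₁, hn₁⟩ := (eventually_atTop).1 (h0.eventually (gt_mem_nhds hε))
  set n₀ := max (max n₁ ⌈|t|⌉₊) 20 with hn₀
  refine ⟨aSeq (n₀+1), fun x hx => ?_⟩
  obtain ⟨k, hk0, hkx, hkx'⟩ := exists_block hx
  have hk1 : 1 ≤ k := by omega
  set j := k - 1 with hj_def
  have hjk : k = j + 1 := by omega
  have hj20 : 20 ≤ j := by omega
  have hjn₁ : n₁ ≤ j := by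
    have : n₁ ≤ n₀ := le_trans (le_max_left _ _) (le_max_left _ _)
    omega
  have htj : |t| ≤ aSeq j := by
    have h1 : |t| ≤ ⌈|t|⌉₊ := Nat.le_ceil _
    have h2 : (⌈|t|⌉₊ : ℝ) ≤ (j : ℝ) := by
      have : ⌈|t|⌉₊ ≤ n₀ := le_trans (le_max_right _ _) (le_max_left _ _)
      exact_mod_cast le_trans this (by omega : n₀ ≤ j)
    exact h1.trans (h2.trans (a_ge j))
  rw [hjk] at hkx hkx'
  -- x ∈ [a_{j+1}, a_{j+2}], x + t ∈ [a_j, a_{j+3}]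
  have hxm : x ∈ Set.Icc (aSeq (j+1)) (aSeq (j+2)) := ⟨hkx, hkx'.le⟩
  have habs := abs_le.1 (le_refl |t|)
  have hxtm : x + t ∈ Set.Icc (aSeq j) (aSeq (j+3)) := by
    constructor
    · have := a_db j
      linarith [habs.1, htj, hkx]
    · have h1 : aSeq j ≤ aSeq (j+2) := a_le (by omega)
      have h2 := a_db (j+2)
      linarith [habs.2, htj, hkx'.le]
  have hxIcc : x ∈ Set.Icc (aSeq j) (aSeq (j+3)) := by
    constructor
    · exact le_trans (a_le (by omega)) hkx
    · exact le_trans hkx'.le (a_le (by omega))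
  -- Lipschitz on [a_j, a_{j+3}]
  set Kt := Kc j + Kc (j+1) + Kc (j+2) with hKt
  have hK0 := Kc_nonneg j
  have hK1 := Kc_nonneg (j+1)
  have hK2 := Kc_nonneg (j+2)
  have lip1 : MyLip f₀ Kt (aSeq j) (aSeq (j+1)) :=
    mylip_mono (block_lip hf₀ (by omega)) (by rw [hKt]; linarith)
  have lip2 : MyLip f₀ Kt (aSeq (j+1)) (aSeq (j+2)) :=
    mylip_mono (block_lip hf₀ (by omega)) (by rw [hKt]; linarith)
  have lip3 : MyLip f₀ Kt (aSeq (j+2)) (aSeq (j+3)) :=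
    mylip_mono (block_lip hf₀ (by omega)) (by rw [hKt]; linarith)
  have lip12 : MyLip f₀ Kt (aSeq j) (aSeq (j+2)) :=
    mylip_glue (a_le (by omega)) (a_le (by omega)) lip1 lip2
  have lip : MyLip f₀ Kt (aSeq j) (aSeq (j+3)) :=
    mylip_glue (a_le (by omega)) (a_le (by omega)) lip12 lip3
  have hdiff : |f₀ (x+t) - f₀ x| ≤ Kt * |t| := by
    have := lip x hxIcc (x+t) hxtm
    simpa using this
  have hlb : 2 / aSeq (j+2) ^ 3 ≤ f₀ x := block_lb hf₀ (by omega) x hxm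
  have hfx : 0 < f₀ x := by
    apply hpos
    linarith [a_pos (j+1), hkx]
  have hv : (0:ℝ) < 2 / aSeq (j+2) ^ 3 := div_pos two_pos (pow_pos (a_pos _) 3)
  rw [Real.dist_eq]
  have he : f₀ (x+t) / f₀ x - 1 = (f₀ (x+t) - f₀ x) / f₀ x := by
    field_simp
  rw [he, abs_div, abs_of_pos hfx]
  have step1 : |f₀ (x+t) - f₀ x| / f₀ x ≤ (Kt * |t|) / (2 / aSeq (j+2) ^ 3) :=
    div_le_div₀ (mul_nonneg (by linarith) (abs_nonneg t)) hdiff hv hlb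
  have step2 : (Kt * |t|) / (2 / aSeq (j+2) ^ 3) = (aSeq (j+2) ^ 3 / 2 * Kt) * |t| := by
    field_simp
  have step3 : (aSeq (j+2) ^ 3 / 2 * Kt) * |t| ≤ (6 * (1/2:ℝ)^j) * |t| :=
    mul_le_mul_of_nonneg_right (esum_bound hj20) (abs_nonneg t)
  have step4 : 6 * (1/2:ℝ)^j * |t| < ε := hn₁ j hjn₁
  calc |f₀ (x+t) - f₀ x| / f₀ x ≤ (Kt * |t|) / (2 / aSeq (j+2) ^ 3) := step1
    _ = (aSeq (j+2) ^ 3 / 2 * Kt) * |t| := step2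
    _ ≤ (6 * (1/2:ℝ)^j) * |t| := step3
    _ < ε := step4

lemma f0_bound {f₀ : ℝ → ℝ} (hf₀ : PWConstruction f₀) {x : ℝ} (hx : aSeq 5 ≤ x) :
    f₀ x ≤ x ^ (-2 : ℝ) := by
  obtain ⟨k, hk5, hkx, hkx'⟩ := exists_block hx
  have hub := block_ub hf₀ (by omega : 2 ≤ k) x ⟨hkx, hkx'.le⟩
  have hx0 : 0 < x := lt_of_lt_of_le (a_pos 5) hx
  have h1 : x ^ (-2:ℝ) = 1 / x ^ 2 := by
    rw [Real.rpow_neg hx0.le, Real.rpow_two]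
    exact inv_eq_one_div _
  rw [h1]
  have h2 : 2 / aSeq k ^ 3 ≤ 1 / aSeq (k+1) ^ 2 := by
    rw [div_le_div_iff₀ (pow_pos (a_pos k) 3) (pow_pos (a_pos (k+1)) 2)]
    have e1 : 2 * aSeq (k+1) ^ 2 = (2:ℝ) ^ (1 + (k+1)^2 * 2) := by
      unfold aSeq
      rw [pow_add, ← pow_mul]
      norm_num
    have e2 : (1:ℝ) * aSeq k ^ 3 = (2:ℝ) ^ (k^2 * 3) := by
      unfold aSeq
      rw [one_mul, ← pow_mul]
    rw [e1, e2]
    apply pow_le_pow_right₀ one_le_two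
    have h5 : 5 * k ≤ k * k := Nat.mul_le_mul_right k hk5
    nlinarith
  have h3 : 1 / aSeq (k+1) ^ 2 ≤ 1 / x ^ 2 := by
    apply div_le_div_of_nonneg_left (by norm_num) (pow_pos hx0 2)
    exact pow_le_pow_left₀ hx0.le hkx'.le 2
  linarith

lemma f0_integrable {f₀ : ℝ → ℝ} (hf₀ : PWConstruction f₀) :
    MeasureTheory.IntegrableOn f₀ (Set.Ici (0:ℝ)) := by
  have hcont := hf₀.1
  have hpos := hf₀.2.1
  have ha5 : (0:ℝ) < aSeq 5 := a_pos 5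
  have h1 : MeasureTheory.IntegrableOn f₀ (Set.Icc (0:ℝ) (aSeq 5)) := by
    apply ContinuousOn.integrableOn_Icc
    exact hcont.mono (fun y hy => hy.1)
  have h2 : MeasureTheory.IntegrableOn f₀ (Set.Ioi (aSeq 5)) := by
    have hg : MeasureTheory.IntegrableOn (fun x : ℝ => x ^ (-2:ℝ)) (Set.Ioi (aSeq 5)) :=
      integrableOn_Ioi_rpow_of_lt (by norm_num) ha5
    apply MeasureTheory.Integrable.mono hg
    · exact (hcont.mono (fun y hy => le_of_lt (lt_of_le_of_lt ha5.le hy))).aestronglyMeasurable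
        measurableSet_Ioi
    · rw [MeasureTheory.ae_restrict_iff' measurableSet_Ioi]
      apply MeasureTheory.ae_of_all
      intro x hx
      have hx5 : aSeq 5 ≤ x := le_of_lt hx
      have hx0 : (0:ℝ) ≤ x := le_trans ha5.le hx5
      rw [Real.norm_eq_abs, Real.norm_eq_abs, abs_of_pos (hpos x hx0)]
      have hb := f0_bound hf₀ hx5
      have : (0:ℝ) < x ^ (-2:ℝ) := Real.rpow_pos_of_pos (lt_of_lt_of_le ha5 hx5) _
      rw [abs_of_pos this]
      exact hb
  have h3 : Set.Ici (0:ℝ) ⊆ Set.Icc (0:ℝ) (aSeq 5) ∪ Set.Ioi (aSeq 5) := by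
    intro y hy
    rcases le_or_gt y (aSeq 5) with h | h
    · exact Or.inl ⟨hy, h⟩
    · exact Or.inr h
  exact ((h1.union h2).mono_set h3)

lemma int_pos {f₀ : ℝ → ℝ} (hf₀ : PWConstruction f₀) :
    0 < ∫ y in Set.Ici (0:ℝ), f₀ y := by
  have hpos := hf₀.2.1
  rw [MeasureTheory.setIntegral_pos_iff_support_of_nonneg_ae]
  · have hsub : Set.Icc (0:ℝ) 1 ⊆ Function.support f₀ ∩ Set.Ici 0 := by
      intro y hy
      exact ⟨ne_of_gt (hpos y hy.1), hy.1⟩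
    calc (0:ENNReal) < 1 := by norm_num
      _ = MeasureTheory.volume (Set.Icc (0:ℝ) 1) := by simp
      _ ≤ _ := MeasureTheory.measure_mono hsub
  · rw [Filter.EventuallyLE, MeasureTheory.ae_restrict_iff' measurableSet_Ici]
    exact MeasureTheory.ae_of_all _ (fun y hy => (hpos y hy).le)
  · exact f0_integrable hf₀

theorem pw_density_long_tailed (f₀ : ℝ → ℝ) (hf₀ : PWConstruction f₀) :
    (∀ x : ℝ, 0 ≤ x → 0 < normExt f₀ x) ∧
    ∀ t : ℝ, Tendsto (fun x => normExt f₀ (x + t) / normExt f₀ x) atTop (nhds 1) := by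
  have hpos := hf₀.2.1
  have hI := int_pos hf₀
  constructor
  · intro x hx
    unfold normExt
    rw [if_neg (not_lt.2 hx)]
    exact div_pos (hpos x hx) hI
  · intro t
    have heq : (fun x => f₀ (x + t) / f₀ x) =ᶠ[atTop]
        (fun x => normExt f₀ (x + t) / normExt f₀ x) := by
      filter_upwards [eventually_ge_atTop (max 0 (-t))] with x hx
      have hx0 : (0:ℝ) ≤ x := le_trans (le_max_left _ _) hx
      have hxt : (0:ℝ) ≤ x + t := by
        have := le_trans (le_max_right _ _) hx
        linarith
      simp only [normExt]
      rw [if_neg (not_lt.2 hxt), if_neg (not_lt.2 hx0)]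
      rw [div_div_div_comm, div_self hI.ne', div_one]
    exact (ratio_tendsto hf₀ t).congr' heq
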